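/- For every positive integer n: Σ_{j=1}^n 1/(j^2 + 1) = -1/2 + 1/(2*(n^2+1)) + (4*pi/(exp(4*pi) - 1)) * ∫_0^1 exp(4*pi*u) * cos(2*pi*n*(1-u)) * sin(2*pi*n*u) * cot(2*pi*u) du. -/

import Mathlib

open Real MeasureTheory

private lemma trig_sum (θ : ℝ) (n : ℕ) (hn : 1 ≤ n) :
    Real.cos θ * Real.sin (2 * n * θ) =
      Real.sin θ * (1 + Real.cos (2 * n * θ)) +
        2 * Real.sin θ * ∑ k ∈ Finset.Ico 1 n, Real.cos (2 * k * θ) := by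
  induction n, hn using Nat.le_induction with
  | base =>
      simp only [Nat.cast_one, mul_one, Finset.Ico_self, Finset.sum_empty, mul_zero, add_zero]
      rw [Real.sin_two_mul, Real.cos_two_mul]; ring
  | succ m hm ih =>
      rw [Finset.sum_Ico_succ_top hm]
      have h1 : (2 : ℝ) * (m+1 : ℕ) * θ = 2*(m:ℝ)*θ + 2*θ := by push_cast; ring
      rw [h1, Real.sin_add, Real.cos_add, Real.sin_two_mul, Real.cos_two_mul]
      linear_combination ih + 2 * Real.cos θ * Real.sin (2*(m:ℝ)*θ) * (Real.sin_sq_add_cos_sq θ)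

private lemma exp_cos_integral (k : ℕ) :
    ∫ u in (0:ℝ)..1, Real.exp (4*π*u) * Real.cos (4*π*k*u) =
      (Real.exp (4*π) - 1) / (4*π*((k:ℝ)^2+1)) := by
  have hπ : (0:ℝ) < π := Real.pi_pos
  have hD : ((4*π)^2*((k:ℝ)^2+1)) ≠ 0 := by positivity
  have key : ∀ u ∈ Set.uIcc (0:ℝ) 1,
      HasDerivAt (fun u => Real.exp (4*π*u)*(4*π*Real.cos (4*π*k*u) + 4*π*k*Real.sin (4*π*k*u))
          / ((4*π)^2*((k:ℝ)^2+1)))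
        (Real.exp (4*π*u) * Real.cos (4*π*k*u)) u := by
    intro u _
    have hlin : ∀ c : ℝ, HasDerivAt (fun u : ℝ => c*u) c u := by
      intro c; simpa using (hasDerivAt_id u).const_mul c
    have h1 : HasDerivAt (fun u : ℝ => Real.exp (4*π*u)) (Real.exp (4*π*u) * (4*π)) u :=
      (hlin (4*π)).exp
    have h2 : HasDerivAt (fun u : ℝ => Real.cos (4*π*k*u)) (-Real.sin (4*π*k*u) * (4*π*k)) u :=
      (hlin (4*π*k)).cos
    have h3 : HasDerivAt (fun u : ℝ => Real.sin (4*π*k*u)) (Real.cos (4*π*k*u) * (4*π*k)) u :=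
      (hlin (4*π*k)).sin
    have h4 := ((h1.mul ((h2.const_mul (4*π)).add (h3.const_mul (4*π*(k:ℝ))))).div_const
      ((4*π)^2*((k:ℝ)^2+1)))
    convert h4 using 1
    · rfl
    · rfl
    · rfl
    · simp only [Pi.add_apply]
      field_simp
      ring
  rw [intervalIntegral.integral_eq_sub_of_hasDerivAt key
    (((Real.continuous_exp.comp (continuous_const.mul continuous_id)).mul
      (Real.continuous_cos.comp (continuous_const.mul continuous_id))).intervalIntegrable _ _)]
  have hc1 : Real.cos (4*π*(k:ℝ)) = 1 := by
    rw [show (4:ℝ)*π*(k:ℝ) = (2*k : ℕ)*(2*π) by push_cast; ring, Real.cos_nat_mul_two_pi]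
  have hs1 : Real.sin (4*π*(k:ℝ)) = 0 := by
    rw [show (4:ℝ)*π*(k:ℝ) = (4*k : ℕ)*π by push_cast; ring, Real.sin_nat_mul_pi]
  simp only [mul_zero, mul_one, hc1, hs1, Real.cos_zero, Real.sin_zero, Real.exp_zero]
  field_simp
  ring

theorem sum_one_div_sq_add_one (n : ℕ) (hn : 0 < n) :
    ∑ j ∈ Finset.Icc 1 n, 1 / ((j : ℝ) ^ 2 + 1) =
      -1 / 2 + 1 / (2 * ((n : ℝ) ^ 2 + 1)) +
        (4 * Real.pi / (Real.exp (4 * Real.pi) - 1)) *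
          ∫ u in (0 : ℝ)..1,
            Real.exp (4 * Real.pi * u) * Real.cos (2 * Real.pi * n * (1 - u)) *
              Real.sin (2 * Real.pi * n * u) * Real.cot (2 * Real.pi * u) := by
  have hπ : (0:ℝ) < π := Real.pi_pos
  have hE : Real.exp (4*π) - 1 ≠ 0 := by
    have : (1:ℝ) < Real.exp (4*π) := by
      rw [show (1:ℝ) = Real.exp 0 by simp]; exact Real.exp_lt_exp.mpr (by positivity)
    linarith
  -- step 1: replace the integrand a.e.
  have hZ : volume {x : ℝ | Real.sin (2*π*x) = 0} = 0 := by
    have hc : Set.Countable {x : ℝ | Real.sin (2*π*x) = 0} := by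
      apply Set.Countable.mono ?_ (Set.countable_range (fun m : ℤ => (m:ℝ)/2))
      intro x hx
      rw [Set.mem_setOf_eq, Real.sin_eq_zero_iff] at hx
      obtain ⟨m, hm⟩ := hx
      refine ⟨m, ?_⟩
      have : (m:ℝ) = 2*x := by
        apply mul_right_cancel₀ Real.pi_ne_zero; linarith [hm]
      show (m:ℝ)/2 = x; rw [this]; ring
    exact hc.measure_zero _
  have hcongr : (∫ u in (0 : ℝ)..1,
        Real.exp (4 * Real.pi * u) * Real.cos (2 * Real.pi * n * (1 - u)) *
          Real.sin (2 * Real.pi * n * u) * Real.cot (2 * Real.pi * u)) =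
      ∫ u in (0:ℝ)..1, Real.exp (4*π*u) *
        ((1 + Real.cos (4*π*n*u))/2 + ∑ k ∈ Finset.Ico 1 n, Real.cos (4*π*k*u)) := by
    apply intervalIntegral.integral_congr_ae
    have hae : ∀ᵐ x ∂(volume : Measure ℝ), Real.sin (2*π*x) ≠ 0 :=
      (measure_eq_zero_iff_ae_notMem.mp hZ).mono (fun x hx => hx)
    filter_upwards [hae] with u hsin _
    have hcos : Real.cos (2*π*(n:ℝ)*(1-u)) = Real.cos (2*π*(n:ℝ)*u) := by
      rw [show 2*π*(n:ℝ)*(1-u) = (n:ℝ)*(2*π) - 2*π*(n:ℝ)*u by ring, Real.cos_sub,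
        Real.cos_nat_mul_two_pi, show (n:ℝ)*(2*π) = (2*n:ℕ)*π by push_cast; ring,
        Real.sin_nat_mul_pi]
      ring
    have key := trig_sum (2*π*u) n hn
    have e1 : (2:ℝ)*(n:ℝ)*(2*π*u) = 4*π*(n:ℝ)*u := by ring
    have e2 : ∀ k : ℕ, (2:ℝ)*(k:ℝ)*(2*π*u) = 4*π*(k:ℝ)*u := fun k => by ring
    simp only [e1, e2] at key
    have hs : Real.sin (4*π*(n:ℝ)*u) = 2 * Real.sin (2*π*(n:ℝ)*u) * Real.cos (2*π*(n:ℝ)*u) := by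
      rw [show (4:ℝ)*π*(n:ℝ)*u = 2*(2*π*(n:ℝ)*u) by ring, Real.sin_two_mul]
    rw [hs] at key
    rw [hcos, Real.cot_eq_cos_div_sin]
    have hinv : Real.sin (2*π*u) * (Real.sin (2*π*u))⁻¹ = 1 := mul_inv_cancel₀ hsin
    rw [div_eq_mul_inv]
    linear_combination (Real.exp (4*π*u) / 2 * (Real.sin (2*π*u))⁻¹) * key +
      (Real.exp (4*π*u) * (1 + Real.cos (4*π*n*u)) / 2 +
        Real.exp (4*π*u) * ∑ k ∈ Finset.Ico 1 n, Real.cos (4*π*k*u)) * hinv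
  rw [hcongr]
  -- step 2: compute the integral of the new integrand
  have hcont : ∀ k : ℕ, Continuous (fun u : ℝ => Real.exp (4*π*u) * Real.cos (4*π*k*u)) :=
    fun k => (Real.continuous_exp.comp (continuous_const.mul continuous_id)).mul
      (Real.continuous_cos.comp (continuous_const.mul continuous_id))
  have hsplit : (∫ u in (0:ℝ)..1, Real.exp (4*π*u) *
        ((1 + Real.cos (4*π*n*u))/2 + ∑ k ∈ Finset.Ico 1 n, Real.cos (4*π*k*u))) =
      ((∫ u in (0:ℝ)..1, Real.exp (4*π*u)) +
        (∫ u in (0:ℝ)..1, Real.exp (4*π*u) * Real.cos (4*π*n*u)))/2 +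
      ∑ k ∈ Finset.Ico 1 n, ∫ u in (0:ℝ)..1, Real.exp (4*π*u) * Real.cos (4*π*k*u) := by
    have h1 : (∫ u in (0:ℝ)..1, Real.exp (4*π*u) *
          ((1 + Real.cos (4*π*n*u))/2 + ∑ k ∈ Finset.Ico 1 n, Real.cos (4*π*k*u))) =
        ∫ u in (0:ℝ)..1, ((Real.exp (4*π*u) + Real.exp (4*π*u) * Real.cos (4*π*n*u))/2 +
          ∑ k ∈ Finset.Ico 1 n, Real.exp (4*π*u) * Real.cos (4*π*k*u)) := by
      apply intervalIntegral.integral_congr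
      intro u _
      simp only [mul_add, Finset.mul_sum]
      ring
    rw [h1, intervalIntegral.integral_add, intervalIntegral.integral_div,
      intervalIntegral.integral_add, intervalIntegral.integral_finset_sum]
    · intro k _; exact (hcont k).intervalIntegrable _ _
    · exact (Real.continuous_exp.comp (continuous_const.mul continuous_id)).intervalIntegrable _ _
    · exact (hcont n).intervalIntegrable _ _
    · exact (((Real.continuous_exp.comp (continuous_const.mul continuous_id)).add
        (hcont n)).div_const 2).intervalIntegrable _ _
    · apply Continuous.intervalIntegrable
      exact continuous_finset_sum _ (fun k _ => hcont k)
  have hexp : (∫ u in (0:ℝ)..1, Real.exp (4*π*u)) = (Real.exp (4*π) - 1)/(4*π) := by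
    have := exp_cos_integral 0
    simpa using this
  rw [hsplit, hexp, exp_cos_integral n]
  have hsumval : (∑ k ∈ Finset.Ico 1 n, ∫ u in (0:ℝ)..1,
        Real.exp (4*π*u) * Real.cos (4*π*k*u)) =
      ((Real.exp (4*π) - 1)/(4*π)) * ∑ k ∈ Finset.Ico 1 n, 1/((k:ℝ)^2+1) := by
    rw [Finset.mul_sum]
    apply Finset.sum_congr rfl
    intro k _
    rw [exp_cos_integral k]
    have : ((k:ℝ)^2+1) ≠ 0 := by positivity
    field_simp
  rw [hsumval]
  -- step 3: final algebra
  rw [show Finset.Icc 1 n = Finset.Ico 1 (n+1) by rw [Finset.Ico_add_one_right_eq_Icc],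
    Finset.sum_Ico_succ_top hn]
  have hne : ((n:ℝ)^2+1) ≠ 0 := by positivity
  field_simp
  ring
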